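/- Scott continuity of the loop characteristic function: let Σ be a set, g : Σ → W(Σ) and w, w′ : Σ → U, and define Φ(f)(σ) = w(σ)·f†(g(σ)) + w′(σ)·η(σ) for f : Σ → W(Σ). Then Φ is Scott-continuous with respect to the pointwise order: for every nonempty directed set D of functions Σ → W(Σ) whose pointwise supremum f* (f*(σ)(τ) = ⨆_{f∈D} f(σ)(τ)) has countable support at every σ, one has ⨆_{f∈D} Φ(f)(σ) = Φ(f*)(σ) for every σ ∈ Σ. -/

import Mathlib

open scoped Classical

universe u v

/-- A semiring that is simultaneously a complete lattice with bottom `0`, whose order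
coincides with the natural (additive) order, and in which addition and multiplication
are Scott-continuous. -/
class OLSemiring (U : Type u) extends Semiring U, CompleteLattice U where
  bot_eq_zero : (⊥ : U) = 0
  le_iff_exists_add : ∀ a b : U, a ≤ b ↔ ∃ c, a + c = b
  add_scott : ∀ (D : Set U), D.Nonempty → DirectedOn (· ≤ ·) D → ∀ y : U,
    sSup ((fun x => x + y) '' D) = sSup D + y
  mul_scott_right : ∀ (D : Set U), D.Nonempty → DirectedOn (· ≤ ·) D → ∀ y : U,
    sSup ((fun x => x * y) '' D) = sSup D * y
  mul_scott_left : ∀ (D : Set U), D.Nonempty → DirectedOn (· ≤ ·) D → ∀ y : U,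
    sSup ((fun x => y * x) '' D) = y * sSup D

variable {U : Type u} [OLSemiring U]

/-- Infinite sum: supremum over finite subfamilies of finite sums. -/
noncomputable def wsum {I : Type v} (f : I → U) : U :=
  ⨆ J : Finset I, ∑ i ∈ J, f i

/-- The unit of the weighting monad. -/
noncomputable def eta {X : Type u} (x : X) : X → U :=
  fun y => if y = x then 1 else 0

/-- Kleisli extension: `kext f m y = ∑_{x ∈ supp m} m x * f x y`. -/
noncomputable def kext {X Y : Type u} (f : X → Y → U) (m : X → U) : Y → U :=
  fun y => wsum (fun x : Function.support m => m x.1 * f x.1 y)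


/-- The characteristic function of iteration:
`Φ(f)(σ)(τ) = w(σ)·f†(g(σ))(τ) + w′(σ)·η(σ)(τ)`. -/
noncomputable def Phi {U : Type u} [OLSemiring U] {St : Type u}
    (w w' : St → U) (g : St → St → U) (f : St → St → U) : St → St → U :=
  fun σ τ => w σ * kext f (g σ) τ + w' σ * eta σ τ

section Aux

variable {U : Type u} [OLSemiring U]

theorem ol_add_le_add {a b c d : U} (h1 : a ≤ b) (h2 : c ≤ d) : a + c ≤ b + d := by
  obtain ⟨x, hx⟩ := (OLSemiring.le_iff_exists_add a b).1 h1
  obtain ⟨y, hy⟩ := (OLSemiring.le_iff_exists_add c d).1 h2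
  refine (OLSemiring.le_iff_exists_add _ _).2 ⟨x + y, ?_⟩
  rw [add_add_add_comm, hx, hy]

theorem ol_mul_le_mul_left {a b : U} (c : U) (h : a ≤ b) : c * a ≤ c * b := by
  obtain ⟨x, hx⟩ := (OLSemiring.le_iff_exists_add a b).1 h
  exact (OLSemiring.le_iff_exists_add _ _).2 ⟨c * x, by rw [← mul_add, hx]⟩

theorem ol_iSup_add_const {ι : Sort v} [Nonempty ι] (f : ι → U)
    (hf : Directed (· ≤ ·) f) (y : U) :
    (⨆ i, f i + y) = (⨆ i, f i) + y := by
  have h := OLSemiring.add_scott (Set.range f) (Set.range_nonempty f)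
    hf.directedOn_range y
  rw [← Set.range_comp, sSup_range, sSup_range] at h
  exact h

theorem ol_iSup_const_mul {ι : Sort v} [Nonempty ι] (f : ι → U)
    (hf : Directed (· ≤ ·) f) (y : U) :
    (⨆ i, y * f i) = y * ⨆ i, f i := by
  have h := OLSemiring.mul_scott_left (Set.range f) (Set.range_nonempty f)
    hf.directedOn_range y
  rw [← Set.range_comp, sSup_range, sSup_range] at h
  exact h

theorem ol_iSup_add {ι : Sort v} [Nonempty ι] (A B : ι → U)
    (h : ∀ i j, ∃ k, A i ≤ A k ∧ B i ≤ B k ∧ A j ≤ A k ∧ B j ≤ B k) :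
    (⨆ i, A i + B i) = (⨆ i, A i) + (⨆ i, B i) := by
  have hA : Directed (· ≤ ·) A := fun i j => (h i j).imp fun k hk => ⟨hk.1, hk.2.2.1⟩
  have hB : Directed (· ≤ ·) B := fun i j => (h i j).imp fun k hk => ⟨hk.2.1, hk.2.2.2⟩
  apply le_antisymm
  · exact iSup_le fun i => ol_add_le_add (le_iSup A i) (le_iSup B i)
  · rw [← ol_iSup_add_const A hA]
    apply iSup_le; intro i
    have hcomm : A i + ⨆ j, B j = ⨆ j, A i + B j := by
      rw [add_comm, ← ol_iSup_add_const B hB (A i)]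
      simp [add_comm]
    rw [hcomm]
    apply iSup_le; intro j
    obtain ⟨k, h1, _, _, h4⟩ := h i j
    exact le_trans (ol_add_le_add h1 h4) (le_iSup (fun i => A i + B i) k)

theorem ol_sum_le_sum {α : Type v} (s : Finset α) {f g : α → U}
    (h : ∀ a ∈ s, f a ≤ g a) : ∑ a ∈ s, f a ≤ ∑ a ∈ s, g a := by
  classical
  induction s using Finset.induction_on with
  | empty => simp
  | insert _ _ ha ih =>
    rw [Finset.sum_insert ha, Finset.sum_insert ha]
    exact ol_add_le_add (h _ (Finset.mem_insert_self _ _))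
      (ih fun a haa => h a (Finset.mem_insert_of_mem haa))

theorem ol_iSup_sum {ι : Sort v} [Nonempty ι] {α : Type u} (s : Finset α) (A : ι → α → U)
    (h : ∀ i j, ∃ k, (∀ a, A i a ≤ A k a) ∧ (∀ a, A j a ≤ A k a)) :
    (⨆ i, ∑ a ∈ s, A i a) = ∑ a ∈ s, ⨆ i, A i a := by
  classical
  induction s using Finset.induction_on with
  | empty => simp
  | @insert b s hb ih =>
    rw [Finset.sum_insert hb]
    have : (⨆ i, ∑ a ∈ insert b s, A i a) = ⨆ i, (A i b + ∑ a ∈ s, A i a) := by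
      simp only [Finset.sum_insert hb]
    rw [this, ol_iSup_add, ih]
    intro i j
    obtain ⟨k, h1, h2⟩ := h i j
    exact ⟨k, h1 b, ol_sum_le_sum s fun a _ => h1 a,
      h2 b, ol_sum_le_sum s fun a _ => h2 a⟩

theorem ol_kext_mono {X Y : Type u} (m : X → U) {f f' : X → Y → U}
    (h : f ≤ f') (y : Y) : kext f m y ≤ kext f' m y := by
  apply iSup_mono; intro J
  exact ol_sum_le_sum _ fun x _ => ol_mul_le_mul_left _ (h x.1 y)

theorem ol_kext_iSup {X Y : Type u} {ι : Type u} [Nonempty ι] (F : ι → X → Y → U)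
    (hd : Directed (· ≤ ·) F) (m : X → U) (y : Y) :
    (⨆ i, kext (F i) m y) = kext (fun x y => ⨆ i, F i x y) m y := by
  unfold kext wsum
  rw [iSup_comm]
  apply iSup_congr; intro J
  rw [ol_iSup_sum]
  · refine Finset.sum_congr rfl fun x _ => ?_
    exact ol_iSup_const_mul (fun i => F i x.1 y)
      (fun i j => (hd i j).imp fun k hk => ⟨hk.1 x.1 y, hk.2 x.1 y⟩) (m x.1)
  · intro i j
    obtain ⟨k, h1, h2⟩ := hd i j
    exact ⟨k, fun a => ol_mul_le_mul_left _ (h1 a.1 y),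
      fun a => ol_mul_le_mul_left _ (h2 a.1 y)⟩

end Aux

/-- **Scott continuity of the loop characteristic function**: for every nonempty directed
set `D` of functions `Σ → W(Σ)` (pointwise order) whose pointwise supremum `f*` has
countable support at every state, `⨆_{f∈D} Φ(f)(σ) = Φ(f*)(σ)` for every `σ`. -/
theorem Phi_scott_continuous {U : Type u} [OLSemiring U] {St : Type u}
    (g : St → St → U) (hg : ∀ σ, (Function.support (g σ)).Countable)
    (w w' : St → U)
    (D : Set (St → St → U)) (hne : D.Nonempty) (hdir : DirectedOn (· ≤ ·) D)
    (hD : ∀ f ∈ D, ∀ σ, (Function.support (f σ)).Countable)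
    (hstar : ∀ σ, (Function.support (fun τ => ⨆ f ∈ D, f σ τ)).Countable)
    (σ : St) :
    (fun τ => ⨆ f ∈ D, Phi w w' g f σ τ)
      = Phi w w' g (fun σ' τ => ⨆ f ∈ D, f σ' τ) σ := by
  haveI : Nonempty ↥D := hne.to_subtype
  have hd : Directed (· ≤ ·) (fun f : D => (f : St → St → U)) :=
    directedOn_iff_directed.1 hdir
  have hstareq : (fun σ' τ => ⨆ f ∈ D, f σ' τ)
      = fun σ' τ => ⨆ f : D, (f : St → St → U) σ' τ := by
    funext σ' τ; rw [iSup_subtype']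
  funext τ
  have hsub : (⨆ f ∈ D, Phi w w' g f σ τ)
      = ⨆ f : D, Phi w w' g (f : St → St → U) σ τ := by rw [iSup_subtype']
  rw [hsub, hstareq]
  simp only [Phi]
  have hAdir : Directed (· ≤ ·)
      (fun f : D => w σ * kext (f : St → St → U) (g σ) τ) := by
    intro i j
    obtain ⟨k, h1, h2⟩ := hd i j
    exact ⟨k, ol_mul_le_mul_left _ (ol_kext_mono _ h1 τ),
      ol_mul_le_mul_left _ (ol_kext_mono _ h2 τ)⟩
  rw [ol_iSup_add_const _ hAdir]
  congr 1
  have hkdir : Directed (· ≤ ·) (fun f : D => kext (f : St → St → U) (g σ) τ) := by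
    intro i j
    obtain ⟨k, h1, h2⟩ := hd i j
    exact ⟨k, ol_kext_mono _ h1 τ, ol_kext_mono _ h2 τ⟩
  rw [ol_iSup_const_mul _ hkdir]
  congr 1
  exact ol_kext_iSup _ hd (g σ) τ
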